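/- The Limit Curve Theorem fails for the path topology Z^T on Minkowski space: there exist a sequence (γ_n) of endless causal curves, points x_n in the range of γ_n, and a point x ∈ M with x_n → x in the Euclidean topology T_E, such that no endless causal curve whose range contains x is a Z^T-limit curve of (γ_n). -/

import Mathlib

noncomputable section

open TopologicalSpace Filter

/-- Minkowski space `M = ℝ × ℝ³`. -/
abbrev Mink : Type := ℝ × EuclideanSpace ℝ (Fin 3)

/-- The Euclidean (product) topology on `M`. -/
def TE : TopologicalSpace Mink := inferInstance

/-- Time difference Δt(x,y). -/
def dtime (x y : Mink) : ℝ := y.1 - x.1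

/-- Spatial distance Δr(x,y). -/
def dspace (x y : Mink) : ℝ := ‖y.2 - x.2‖

/-- Chronological order `x ≪ y`. -/
def Chron (x y : Mink) : Prop := dspace x y < dtime x y

/-- Causal order `x ≺ y`. -/
def Causal (x y : Mink) : Prop := dspace x y ≤ dtime x y

/-- Euclidean open ball of radius ε about x. -/
def eball (x : Mink) (ε : ℝ) : Set Mink :=
  {y | Real.sqrt ((y.1 - x.1) ^ 2 + ‖y.2 - x.2‖ ^ 2) < ε}

/-- Time cone `C^T(x)`. -/
def timeCone (x : Mink) : Set Mink := {x} ∪ {y | Chron x y ∨ Chron y x}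

/-- Space cone `C^S(x)`. -/
def spaceCone (x : Mink) : Set Mink := {x} ∪ {y | |dtime x y| < dspace x y}

/-- Light cone `C^L(x)`. -/
def lightCone (x : Mink) : Set Mink := {y | y ≠ x ∧ |dtime x y| = dspace x y}

/-- Causal cone `C^J(x)`. -/
def causalCone (x : Mink) : Set Mink := {x} ∪ {y | Causal x y ∨ Causal y x}

/-- Closed space cone `K^S(x)` (space cone together with the light cone). -/
def closedSpaceCone (x : Mink) : Set Mink := {x} ∪ {y | |dtime x y| ≤ dspace x y}

/-- Bounded time cones, the defining family of `Z^T`. -/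
def BasisT : Set (Set Mink) := {S | ∃ x ε, 0 < ε ∧ S = timeCone x ∩ eball x ε}

/-- Bounded space cones, the defining family of `Z^S`. -/
def BasisS : Set (Set Mink) := {S | ∃ x ε, 0 < ε ∧ S = spaceCone x ∩ eball x ε}

/-- Balls with the light cone of the centre removed, the defining family of `Z`. -/
def BasisZ : Set (Set Mink) := {S | ∃ x ε, 0 < ε ∧ S = eball x ε \ lightCone x}

/-- Zeeman's topology `Z^T` (the Minkowski analogue of the path topology). -/
def ZT : TopologicalSpace Mink := TopologicalSpace.generateFrom BasisT

/-- The topology `Z^S`. -/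
def ZS : TopologicalSpace Mink := TopologicalSpace.generateFrom BasisS

/-- The topology `Z`. -/
def Ztop : TopologicalSpace Mink := TopologicalSpace.generateFrom BasisZ

def Jplus (x : Mink) : Set Mink := {y | Causal x y}
def Jminus (x : Mink) : Set Mink := {y | Causal y x}
def Nplus (x : Mink) : Set Mink := {y | y ≠ x ∧ dtime x y = dspace x y}
def Nminus (x : Mink) : Set Mink := {y | y ≠ x ∧ -dtime x y = dspace x y}

/-- The interval topology `T^tc` whose subbasic open sets are time cones. -/
def Ttc : TopologicalSpace Mink :=
  TopologicalSpace.generateFrom {S | ∃ x, S = timeCone x}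

/-- The interval topology `T^≪` of the irreflexive causal order. -/
def Tll : TopologicalSpace Mink :=
  TopologicalSpace.generateFrom
    ({S | ∃ x, S = Set.univ \ (Jplus x \ {x})} ∪ {S | ∃ x, S = Set.univ \ (Jminus x \ {x})})

/-- The interval topology `T^→` of irreflexive horismos. -/
def Thor : TopologicalSpace Mink :=
  TopologicalSpace.generateFrom
    ({S | ∃ x, S = Set.univ \ Nplus x} ∪ {S | ∃ x, S = Set.univ \ Nminus x})

/-- The topology `(Z^T)′` generated by bounded causal cones. -/
def ZT' : TopologicalSpace Mink :=
  TopologicalSpace.generateFrom {S | ∃ x ε, 0 < ε ∧ S = causalCone x ∩ eball x ε}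

/-- The topology `(Z^S)′` generated by bounded closed space cones. -/
def ZS' : TopologicalSpace Mink :=
  TopologicalSpace.generateFrom {S | ∃ x ε, 0 < ε ∧ S = closedSpaceCone x ∩ eball x ε}

/-- The topology `(T^tc)′` generated by causal cones. -/
def Ttc' : TopologicalSpace Mink :=
  TopologicalSpace.generateFrom {S | ∃ x, S = causalCone x}

/-- The topology `(T^≪)′` generated by closed space cones. -/
def Tll' : TopologicalSpace Mink :=
  TopologicalSpace.generateFrom {S | ∃ x, S = closedSpaceCone x}

/-- An endless causal curve. -/
def EndlessCausalCurve (γ : ℝ → Mink) : Prop :=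
  Continuous γ ∧ (∀ s t : ℝ, s < t → Causal (γ s) (γ t) ∧ γ s ≠ γ t) ∧
    (∀ c : ℝ, ∃ t, c < (γ t).1) ∧ (∀ c : ℝ, ∃ t, (γ t).1 < c)

/-- `γ` is a `T`-limit curve of the sequence `γs` of curves. -/
def IsLimitCurve (T : TopologicalSpace Mink) (γ : ℝ → Mink) (γs : ℕ → ℝ → Mink) : Prop :=
  ∃ nk : ℕ → ℕ, StrictMono nk ∧
    ∀ p ∈ Set.range γ, ∃ pk : ℕ → Mink,
      (∀ k, pk k ∈ Set.range (γs (nk k))) ∧ Filter.Tendsto pk Filter.atTop (@nhds Mink T p)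


/-- Coordinate bound for the Euclidean norm. -/
lemma coord_le_norm (y : EuclideanSpace ℝ (Fin 3)) (i : Fin 3) : |y i| ≤ ‖y‖ := by
  rw [EuclideanSpace.norm_eq]
  have h : |y i| = Real.sqrt (‖y i‖ ^ 2) := by rw [Real.sqrt_sq_eq_abs]; simp
  rw [h]
  apply Real.sqrt_le_sqrt
  exact Finset.single_le_sum (f := fun j => ‖y j‖ ^ 2) (fun j _ => by positivity)
    (Finset.mem_univ i)

/-- First auxiliary spatial direction. -/
def vv1 : EuclideanSpace ℝ (Fin 3) := EuclideanSpace.single 0 1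

/-- Second auxiliary spatial direction. -/
def vv2 : EuclideanSpace ℝ (Fin 3) := EuclideanSpace.single 1 1

lemma vv_apply (c t : ℝ) : (c • vv1 + t • vv2) 0 = c ∧ (c • vv1 + t • vv2) 1 = t := by
  constructor <;> simp [vv1, vv2, EuclideanSpace.single_apply]

lemma norm_vv2 : ‖vv2‖ = 1 := by
  simp [vv2, EuclideanSpace.norm_single]

/-- The Limit Curve Theorem fails for the path topology `Z^T` on Minkowski space. -/
theorem LCT_fails_for_ZT :
    ∃ (γs : ℕ → ℝ → Mink) (xs : ℕ → Mink) (x : Mink),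
      (∀ n, EndlessCausalCurve (γs n)) ∧
      (∀ n, xs n ∈ Set.range (γs n)) ∧
      Filter.Tendsto xs Filter.atTop (@nhds Mink TE x) ∧
      ∀ γ : ℝ → Mink, EndlessCausalCurve γ → x ∈ Set.range γ →
        ¬ IsLimitCurve ZT γ γs := by
  classical
  refine ⟨fun n t => (t, ((n : ℝ) + 1)⁻¹ • vv1 + t • vv2),
    fun n => (0, ((n : ℝ) + 1)⁻¹ • vv1), (0, 0), ?_, ?_, ?_, ?_⟩
  · intro n
    refine ⟨?_, ?_, ?_, ?_⟩
    · exact Continuous.prodMk continuous_id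
        (continuous_const.add (continuous_id.smul continuous_const))
    · intro s t hst
      constructor
      · show dspace _ _ ≤ dtime _ _
        have hs : (((n : ℝ) + 1)⁻¹ • vv1 + t • vv2) - (((n : ℝ) + 1)⁻¹ • vv1 + s • vv2)
            = (t - s) • vv2 := by rw [sub_smul]; abel
        simp only [dspace, dtime, hs, norm_smul, norm_vv2, mul_one, Real.norm_eq_abs]
        rw [abs_of_nonneg (by linarith)]
      · intro h
        have := congrArg Prod.fst h
        simp at this
        exact absurd this (ne_of_lt hst)
    · intro c; exact ⟨c + 1, by simp⟩
    · intro c; exact ⟨c - 1, by simp⟩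
  · intro n; exact ⟨0, by simp⟩
  · have h0 : Filter.Tendsto (fun n : ℕ => ((n : ℝ) + 1)⁻¹ • vv1) Filter.atTop
        (nhds (0 : EuclideanSpace ℝ (Fin 3))) := by
      have h1 : Filter.Tendsto (fun n : ℕ => ((n : ℝ) + 1)⁻¹) Filter.atTop (nhds 0) := by
        simpa only [one_div] using (tendsto_one_div_add_atTop_nhds_zero_nat :
          Filter.Tendsto (fun n : ℕ => 1 / ((n : ℝ) + 1)) Filter.atTop (nhds 0))
      simpa using h1.smul_const vv1
    change Filter.Tendsto _ Filter.atTop (nhds (((0 : ℝ), (0 : EuclideanSpace ℝ (Fin 3))) : Mink))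
    rw [nhds_prod_eq]
    exact Filter.Tendsto.prodMk
      (tendsto_const_nhds : Filter.Tendsto (fun _ : ℕ => (0 : ℝ)) Filter.atTop (nhds 0)) h0
  · rintro γ hγ hxγ ⟨nk, hmono, hlim⟩
    obtain ⟨pk, hmem, htend⟩ := hlim (0, 0) hxγ
    set U : Set Mink := timeCone (0, 0) ∩ eball (0, 0) 1 with hU
    have hUopen : ZT.IsOpen U :=
      TopologicalSpace.GenerateOpen.basic U ⟨(0, 0), 1, one_pos, rfl⟩
    have hxU : ((0, 0) : Mink) ∈ U := by
      constructor
      · exact Or.inl rfl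
      · show Real.sqrt _ < 1
        norm_num
    have hev : ∀ᶠ k in Filter.atTop, pk k ∈ U :=
      htend.eventually (@IsOpen.mem_nhds Mink ZT _ _ hUopen hxU)
    obtain ⟨k, hk⟩ := hev.exists
    obtain ⟨t, ht⟩ := hmem k
    set c : ℝ := ((nk k : ℝ) + 1)⁻¹ with hc
    have hcpos : 0 < c := by positivity
    have hpk : pk k = (t, c • vv1 + t • vv2) := ht.symm
    obtain ⟨ha0, ha1⟩ := vv_apply c t
    have habs : |t| ≤ ‖c • vv1 + t • vv2‖ := by
      simpa [ha1] using coord_le_norm (c • vv1 + t • vv2) 1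
    have hT : pk k ∈ timeCone (0, 0) := hk.1
    rcases hT with h | h
    · -- pk k = (0,0) is impossible since the 0-th spatial coordinate is c ≠ 0
      have : (c • vv1 + t • vv2 : EuclideanSpace ℝ (Fin 3)) = 0 := by
        have := congrArg Prod.snd (hpk.symm.trans h)
        simpa using this
      have := congrArg (fun v : EuclideanSpace ℝ (Fin 3) => v 0) this
      rw [ha0] at this
      simp at this
      exact absurd this (ne_of_gt hcpos)
    · rcases h with h | h
      · -- Chron (0,0) (pk k) : dspace < dtime
        rw [hpk] at h
        have h2 : ‖c • vv1 + t • vv2‖ < t := by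
          simpa [Chron, dspace, dtime] using h
        exact absurd h2 (not_lt.mpr (le_trans (le_abs_self t) habs))
      · -- Chron (pk k) (0,0)
        rw [hpk] at h
        have h2 : ‖c • vv1 + t • vv2‖ < -t := by
          have h3 : dspace (t, c • vv1 + t • vv2) (0, 0)
              < dtime (t, c • vv1 + t • vv2) (0, 0) := h
          simp only [dspace, dtime] at h3
          rw [show ((0, 0) : Mink).2 - (c • vv1 + t • vv2) = -(c • vv1 + t • vv2) by
            simp, norm_neg] at h3
          simpa using h3
        exact absurd h2 (not_lt.mpr (le_trans (neg_le_abs t) habs))
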